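/- The arrival time of the coasting bead on the quadratic path equals the stated integral: suppose x : [0,T] → ℝ is differentiable with x(0) = 0, x(T) = x_f, and for every t ∈ [0,T], ẋ(t) = √(2E − 2g·(a·x(t)² + b·x(t))) / √(1 + (2a·x(t) + b)²). Then T = ∫₀^{x_f} √( (1+(2aξ+b)²) / (2E − 2g(aξ² + bξ)) ) dξ. -/

import Mathlib

/-- **Manoeuvre time of the coasting bead on the quadratic path.**
If `x : [0,T] → ℝ` is differentiable with `x 0 = 0`, `x T = x_f` and satisfies
`ẋ = √(2E − 2g·(a·x² + b·x)) / √(1 + (2a·x + b)²)`, and `2E − 2g·(aξ² + bξ) > 0` on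
`[0, x_f]`, then the arrival time is
`T = ∫₀^{x_f} √((1+(2aξ+b)²)/(2E − 2g(aξ² + bξ))) dξ`. -/
theorem bead_arrival_time (a b g E x_f T : ℝ) (hx_f : 0 < x_f) (hT : 0 < T)
    (hpos : ∀ ξ ∈ Set.Icc (0 : ℝ) x_f, 0 < 2 * E - 2 * g * (a * ξ ^ 2 + b * ξ))
    (x : ℝ → ℝ) (hx0 : x 0 = 0) (hxT : x T = x_f)
    (hode : ∀ t ∈ Set.Icc (0 : ℝ) T,
      HasDerivAt x
        (Real.sqrt (2 * E - 2 * g * (a * (x t) ^ 2 + b * (x t))) /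
          Real.sqrt (1 + (2 * a * x t + b) ^ 2)) t) :
    T = ∫ ξ in (0 : ℝ)..x_f,
        Real.sqrt ((1 + (2 * a * ξ + b) ^ 2) / (2 * E - 2 * g * (a * ξ ^ 2 + b * ξ))) := by
  have huIcc : Set.uIcc (0 : ℝ) T = Set.Icc 0 T := Set.uIcc_of_le hT.le
  -- derivative function
  set x' : ℝ → ℝ := fun t =>
      Real.sqrt (2 * E - 2 * g * (a * (x t) ^ 2 + b * (x t))) /
        Real.sqrt (1 + (2 * a * x t + b) ^ 2) with hx'def
  set f : ℝ → ℝ := fun ξ =>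
      Real.sqrt ((1 + (2 * a * ξ + b) ^ 2) / (2 * E - 2 * g * (a * ξ ^ 2 + b * ξ))) with hfdef
  have hcontx : ContinuousOn x (Set.Icc 0 T) :=
    fun t ht => (hode t ht).continuousAt.continuousWithinAt
  -- monotone
  have hmono : MonotoneOn x (Set.Icc 0 T) := by
    apply monotoneOn_of_deriv_nonneg (convex_Icc 0 T) hcontx
    · intro t ht
      rw [interior_Icc] at ht
      exact ((hode t (Set.Ioo_subset_Icc_self ht)).differentiableAt).differentiableWithinAt
    · intro t ht
      rw [interior_Icc] at ht
      rw [(hode t (Set.Ioo_subset_Icc_self ht)).deriv]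
      positivity
  have himg : ∀ t ∈ Set.Icc (0:ℝ) T, x t ∈ Set.Icc (0:ℝ) x_f := by
    intro t ht
    constructor
    · rw [← hx0]; exact hmono (Set.left_mem_Icc.2 hT.le) ht ht.1
    · rw [← hxT]; exact hmono ht (Set.right_mem_Icc.2 hT.le) ht.2
  -- continuity of x' on Icc
  have hcontx' : ContinuousOn x' (Set.uIcc 0 T) := by
    rw [huIcc]
    have p1 : Continuous fun u : ℝ => 2 * E - 2 * g * (a * u ^ 2 + b * u) := by fun_prop
    have p2 : Continuous fun u : ℝ => 1 + (2 * a * u + b) ^ 2 := by fun_prop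
    apply ContinuousOn.div
    · exact (p1.comp_continuousOn hcontx).sqrt
    · exact (p2.comp_continuousOn hcontx).sqrt
    · intro t _
      have : (0:ℝ) < 1 + (2 * a * x t + b) ^ 2 := by positivity
      exact (Real.sqrt_pos.2 this).ne'
  -- continuity of f on image
  have hcontf : ContinuousOn f (x '' Set.uIcc 0 T) := by
    have hsub : x '' Set.uIcc 0 T ⊆ Set.Icc 0 x_f := by
      rw [huIcc]
      rintro _ ⟨t, ht, rfl⟩
      exact himg t ht
    apply ContinuousOn.mono _ hsub
    have p1 : Continuous fun ξ : ℝ => 1 + (2 * a * ξ + b) ^ 2 := by fun_prop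
    have p2 : Continuous fun ξ : ℝ => 2 * E - 2 * g * (a * ξ ^ 2 + b * ξ) := by fun_prop
    exact ((p1.continuousOn.div p2.continuousOn (fun ξ hξ => (hpos ξ hξ).ne')).sqrt)
  have hode' : ∀ t ∈ Set.uIcc (0:ℝ) T, HasDerivAt x (x' t) t := by
    rw [huIcc]; exact hode
  have key : (∫ t in (0:ℝ)..T, x' t • (f ∘ x) t) = ∫ ξ in (x 0)..(x T), f ξ :=
    intervalIntegral.integral_comp_smul_deriv' hode' hcontx' hcontf
  rw [hx0, hxT] at key
  rw [← key]
  have hone : ∀ t ∈ Set.uIcc (0:ℝ) T, x' t • (f ∘ x) t = 1 := by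
    rw [huIcc]
    intro t ht
    have hx_mem := himg t ht
    have hD : (0:ℝ) < 2 * E - 2 * g * (a * (x t) ^ 2 + b * (x t)) := hpos _ hx_mem
    have hN : (0:ℝ) < 1 + (2 * a * x t + b) ^ 2 := by positivity
    have hsD : Real.sqrt (2 * E - 2 * g * (a * (x t) ^ 2 + b * (x t))) ≠ 0 :=
      (Real.sqrt_pos.2 hD).ne'
    have hsN : Real.sqrt (1 + (2 * a * x t + b) ^ 2) ≠ 0 := (Real.sqrt_pos.2 hN).ne'
    simp only [smul_eq_mul, Function.comp, hx'def, hfdef]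
    rw [Real.sqrt_div hN.le]
    field_simp
    exact div_self (Real.sqrt_ne_zero'.2 (by linarith))
  rw [intervalIntegral.integral_congr hone]
  simp
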